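/- Let a, b > 0 with a ≠ b and set K = SO(2)·diag(a,b) ∪ SO(2)·diag(b,a). There exists a constant c > 0 (depending only on a,b) such that for every matrix F ∈ ℝ^{2×2} with det F > 0, min{(||F e₁| - a| + ||F e₂| - b|)², (||F e₁| - b| + ||F e₂| - a|)²} + |⟨F e₁, F e₂⟩| ≥ c · dist(F, K)², where F e₁, F e₂ are the columns of F, ⟨·,·⟩ is the Euclidean inner product, and dist(F,K) = inf_{M∈K} |F - M| in the Frobenius norm. -/

import Mathlib

open Matrix

def SO2 : Set (Matrix (Fin 2) (Fin 2) ℝ) :=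
  {Q | Q * Qᵀ = 1 ∧ Q.det = 1}

noncomputable def frob (M : Matrix (Fin 2) (Fin 2) ℝ) : ℝ :=
  Real.sqrt (∑ i, ∑ j, (M i j) ^ 2)

noncomputable def distTo (F : Matrix (Fin 2) (Fin 2) ℝ)
    (S : Set (Matrix (Fin 2) (Fin 2) ℝ)) : ℝ :=
  sInf ((fun M => frob (F - M)) '' S)

/-- The two energy wells `SO(2)U₀ ∪ SO(2)U₁`. -/
def wells (a b : ℝ) : Set (Matrix (Fin 2) (Fin 2) ℝ) :=
  ((fun Q => Q * !![a, 0; 0, b]) '' SO2) ∪ ((fun Q => Q * !![b, 0; 0, a]) '' SO2)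

private lemma sigma_bound (q r₂ σ τ : ℝ) (hr₂ : 0 ≤ r₂) (hσ : 0 ≤ σ) (hσr : σ ≤ r₂)
    (hst : σ^2 + τ^2 = r₂^2) : (σ-q)^2 ≤ 2*(r₂-q)^2 + 2*τ^2 := by
  rcases hr₂.eq_or_lt with h | h
  · have h1 : σ = 0 := le_antisymm (h ▸ hσr) hσ
    have h2 : τ^2 = 0 := by nlinarith
    rw [h1, ← h, h2]; nlinarith [sq_nonneg q]
  · have e : r₂*(σ^2+τ^2) = r₂*r₂^2 := by rw [hst]
    nlinarith [mul_nonneg hσ (sq_nonneg (r₂-q)),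
      mul_nonneg (sub_nonneg.2 hσr) (sq_nonneg (2*r₂-q)),
      mul_nonneg (mul_nonneg hr₂ hσ) (sub_nonneg.2 hσr), h, e]

private lemma sq_sum_bound (x y : ℝ) : x^2 + 2*y^2 ≤ 2*(|x|+|y|)^2 := by
  nlinarith [sq_abs x, sq_abs y, sq_nonneg x, mul_nonneg (abs_nonneg x) (abs_nonneg y)]

private lemma sq_le_add_sq (t u v : ℝ) (ht : 0 ≤ t) (htu : t ≤ u) (hv : 0 ≤ v) :
    t^2 ≤ (u+v)^2 := by nlinarith

private lemma tau_sq_le (σ τ r₂ : ℝ) (hst : σ^2 + τ^2 = r₂^2) : τ^2 ≤ r₂^2 := by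
  nlinarith [sq_nonneg σ]

private lemma le_of_sq_le (σ r₂ : ℝ) (hσ : 0 ≤ σ) (hr₂ : 0 ≤ r₂) (h : σ^2 ≤ r₂^2) :
    σ ≤ r₂ := by nlinarith

private lemma sq_le_mul (t c : ℝ) (h0 : 0 ≤ t) (h : t ≤ c) : t^2 ≤ c*t := by nlinarith

private lemma sq_mono (r c : ℝ) (h0 : 0 ≤ r) (h : r ≤ c) : r^2 ≤ c^2 := by nlinarith

private lemma twoM_le (m M r₁ : ℝ) (hm : 0 < m) (hM : 0 ≤ M) (h1 : m/2 ≤ r₁) :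
    2*M ≤ (4*M/m)*r₁ := by
  rw [div_mul_eq_mul_div, le_div_iff₀ hm]
  nlinarith [mul_nonneg hM (sub_nonneg.2 h1)]

set_option maxHeartbeats 1000000 in
private lemma key_real (a b m M r₁ r₂ σ τ D : ℝ) (hm : 0 < m) (hma : m ≤ a) (hmb : m ≤ b)
    (haM : a ≤ M) (hbM : b ≤ M)
    (hr₁ : 0 < r₁) (hr₂ : 0 ≤ r₂) (hσ : 0 < σ)
    (hst : σ^2 + τ^2 = r₂^2)
    (hD1 : D ≤ (r₁-a)^2 + τ^2 + (σ-b)^2)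
    (hD2 : D ≤ (r₁-b)^2 + τ^2 + (σ-a)^2) :
    min ((|r₁-a|+|r₂-b|)^2) ((|r₁-b|+|r₂-a|)^2) + r₁*|τ| ≥
      (2 + 3*(4 + 4*M/m + 16*M^2/m^2))⁻¹ * D := by
  have ha : 0 < a := lt_of_lt_of_le hm hma
  have hb : 0 < b := lt_of_lt_of_le hm hmb
  have hM : 0 < M := lt_of_lt_of_le ha haM
  obtain ⟨Cp, hCpdef⟩ : ∃ x : ℝ, x = 4 + 4*M/m + 16*M^2/m^2 := ⟨_, rfl⟩
  rw [← hCpdef]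
  obtain ⟨X, hXdef⟩ : ∃ x : ℝ,
      x = min ((|r₁-a|+|r₂-b|)^2) ((|r₁-b|+|r₂-a|)^2) := ⟨_, rfl⟩
  rw [← hXdef]
  have hdiv1 : 0 ≤ 4*M/m := by positivity
  have hdiv2 : 0 ≤ 16*M^2/m^2 := by positivity
  have hCp4 : (4:ℝ) ≤ Cp := by rw [hCpdef]; linarith
  have hCpMm : 4*M/m ≤ Cp := by rw [hCpdef]; linarith
  have hCpM2 : 16*M^2/m^2 ≤ Cp := by rw [hCpdef]; linarith
  have hCp0 : (0:ℝ) ≤ Cp := by linarith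
  have hX0 : 0 ≤ X := hXdef ▸ le_min (sq_nonneg _) (sq_nonneg _)
  have hτsq : τ^2 ≤ r₂^2 := tau_sq_le σ τ r₂ hst
  have habs : |τ| ≤ r₂ := by
    rw [← Real.sqrt_sq_eq_abs, ← Real.sqrt_sq hr₂]
    exact Real.sqrt_le_sqrt hτsq
  have hσr₂ : σ ≤ r₂ := le_of_sq_le σ r₂ hσ.le hr₂ (by linarith [sq_nonneg τ])
  have hrt0 : 0 ≤ r₁*|τ| := mul_nonneg hr₁.le (abs_nonneg τ)
  have hA : (σ-b)^2 ≤ 2*(r₂-b)^2 + 2*τ^2 := sigma_bound b r₂ σ τ hr₂ hσ.le hσr₂ hst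
  have hB : (σ-a)^2 ≤ 2*(r₂-a)^2 + 2*τ^2 := sigma_bound a r₂ σ τ hr₂ hσ.le hσr₂ hst
  have hDa : D ≤ 2*((|r₁-a|+|r₂-b|)^2) + 3*τ^2 := by
    have h9 := sq_sum_bound (r₁-a) (r₂-b); linarith
  have hDb : D ≤ 2*((|r₁-b|+|r₂-a|)^2) + 3*τ^2 := by
    have h9 := sq_sum_bound (r₁-b) (r₂-a); linarith
  have hDX : D ≤ 2*X + 3*τ^2 := by
    rcases min_cases ((|r₁-a|+|r₂-b|)^2) ((|r₁-b|+|r₂-a|)^2) with ⟨h,_⟩|⟨h,_⟩ <;>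
      rw [hXdef, h] <;> linarith
  have hXY : X ≤ X + r₁*|τ| := by linarith
  have hτX : τ^2 ≤ Cp * (X + r₁*|τ|) := by
    rcases le_or_gt r₂ (2*M) with h2 | h2
    · rcases le_or_gt (m/2) r₁ with h1 | h1
      · have h3 : τ^2 ≤ 2*M*|τ| := by
          have := sq_le_mul (|τ|) (2*M) (abs_nonneg τ) (habs.trans h2)
          have hsa := sq_abs τ; linarith
        have h5 : 2*M ≤ (4*M/m)*r₁ := twoM_le m M r₁ hm hM.le h1
        have h4 : 2*M*|τ| ≤ (4*M/m)*(r₁*|τ|) := by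
          have h45 := mul_le_mul_of_nonneg_right h5 (abs_nonneg τ)
          calc 2*M*|τ| ≤ (4*M/m)*r₁*|τ| := h45
            _ = (4*M/m)*(r₁*|τ|) := by ring
        have h6 : (4*M/m)*(r₁*|τ|) ≤ Cp*(r₁*|τ|) :=
          mul_le_mul_of_nonneg_right hCpMm hrt0
        have h7 : Cp*(r₁*|τ|) ≤ Cp * (X + r₁*|τ|) :=
          mul_le_mul_of_nonneg_left (by linarith) hCp0
        exact h3.trans (h4.trans (h6.trans h7))
      · have e5a : a - r₁ ≤ |r₁ - a| := by rw [abs_sub_comm]; exact le_abs_self _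
        have e5b : b - r₁ ≤ |r₁ - b| := by rw [abs_sub_comm]; exact le_abs_self _
        have hXm : m^2/4 ≤ X := by
          have k1 := sq_le_add_sq (m/2) (|r₁-a|) (|r₂-b|) (by linarith) (by linarith)
            (abs_nonneg _)
          have k2 := sq_le_add_sq (m/2) (|r₁-b|) (|r₂-a|) (by linarith) (by linarith)
            (abs_nonneg _)
          have e7 : (m/2)^2 = m^2/4 := by ring
          rw [hXdef]
          exact le_min (by linarith) (by linarith)
        have e1 : τ^2 ≤ 4*M^2 := by
          have := sq_mono r₂ (2*M) hr₂ h2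
          have e8 : (2*M)^2 = 4*M^2 := by ring
          linarith
        have e2 : (4:ℝ)*M^2 = (16*M^2/m^2) * (m^2/4) := by field_simp; ring
        have e3 : (16*M^2/m^2) * (m^2/4) ≤ (16*M^2/m^2) * X :=
          mul_le_mul_of_nonneg_left hXm (by positivity)
        have e4 : (16*M^2/m^2) * X ≤ Cp * X := mul_le_mul_of_nonneg_right hCpM2 hX0
        have e6 : Cp * X ≤ Cp * (X + r₁*|τ|) := mul_le_mul_of_nonneg_left hXY hCp0
        calc τ^2 ≤ 4*M^2 := e1
          _ = (16*M^2/m^2) * (m^2/4) := e2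
          _ ≤ (16*M^2/m^2) * X := e3
          _ ≤ Cp * X := e4
          _ ≤ Cp * (X + r₁*|τ|) := e6
    · have e5a : r₂ - b ≤ |r₂ - b| := le_abs_self _
      have e5b : r₂ - a ≤ |r₂ - a| := le_abs_self _
      have hXr : r₂^2/4 ≤ X := by
        have k1 := sq_le_add_sq (r₂/2) (|r₂-b|) (|r₁-a|) (by linarith) (by linarith)
          (abs_nonneg _)
        have k2 := sq_le_add_sq (r₂/2) (|r₂-a|) (|r₁-b|) (by linarith) (by linarith)
          (abs_nonneg _)
        have e7 : (r₂/2)^2 = r₂^2/4 := by ring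
        have e8 : (|r₂-b|+|r₁-a|)^2 = (|r₁-a|+|r₂-b|)^2 := by ring
        have e9 : (|r₂-a|+|r₁-b|)^2 = (|r₁-b|+|r₂-a|)^2 := by ring
        rw [hXdef]
        exact le_min (by linarith) (by linarith)
      have e4 : 4 * X ≤ Cp * X := mul_le_mul_of_nonneg_right hCp4 hX0
      have e6 : Cp * X ≤ Cp * (X + r₁*|τ|) := mul_le_mul_of_nonneg_left hXY hCp0
      calc τ^2 ≤ 4*(r₂^2/4) := by linarith
        _ ≤ 4*X := by linarith
        _ ≤ Cp * X := e4
        _ ≤ Cp * (X + r₁*|τ|) := e6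
  have hfin : D ≤ (2 + 3*Cp) * (X + r₁*|τ|) := by
    have expand : (2 + 3*Cp) * (X + r₁*|τ|)
        = 2*X + 2*(r₁*|τ|) + 3*(Cp*(X + r₁*|τ|)) := by ring
    rw [expand]; linarith
  have hpos : (0:ℝ) < 2 + 3*Cp := by linarith
  rw [ge_iff_le, inv_mul_le_iff₀ hpos]
  exact hfin

private lemma well_identity (c s r₁ F01 F11 p q : ℝ) (h3 : c^2 + s^2 = 1) :
    (c*r₁ - c*p)^2 + (F01 + s*q)^2 + (s*r₁ - s*p)^2 + (F11 - c*q)^2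
      = (r₁ - p)^2 + (c*F01 + s*F11)^2 + ((c*F11 - s*F01) - q)^2 := by
  linear_combination ((r₁-p)^2 + q^2 - F01^2 - F11^2) * h3

private lemma col_pos (p q r s : ℝ) (h : 0 < p*s - q*r) : 0 < p^2 + r^2 := by
  rcases lt_or_ge 0 (p^2+r^2) with h'|h'
  · exact h'
  · have hp : p = 0 := by nlinarith [sq_nonneg p, sq_nonneg r]
    have hr : r = 0 := by nlinarith [sq_nonneg p, sq_nonneg r]
    rw [hp, hr] at h; norm_num at h

set_option maxHeartbeats 1000000 in
theorem lower_bound_two_well (a b : ℝ) (ha : 0 < a) (hb : 0 < b) (hab : a ≠ b) :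
    ∃ c : ℝ, 0 < c ∧ ∀ F : Matrix (Fin 2) (Fin 2) ℝ, 0 < F.det →
      min ((|Real.sqrt ((F 0 0) ^ 2 + (F 1 0) ^ 2) - a| +
            |Real.sqrt ((F 0 1) ^ 2 + (F 1 1) ^ 2) - b|) ^ 2)
          ((|Real.sqrt ((F 0 0) ^ 2 + (F 1 0) ^ 2) - b| +
            |Real.sqrt ((F 0 1) ^ 2 + (F 1 1) ^ 2) - a|) ^ 2) +
        |F 0 0 * F 0 1 + F 1 0 * F 1 1| ≥ c * (distTo F (wells a b)) ^ 2 := by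
  have hm : 0 < min a b := lt_min ha hb
  have hM : 0 < max a b := lt_of_lt_of_le hm min_le_max
  refine ⟨(2 + 3*(4 + 4*(max a b)/(min a b) + 16*(max a b)^2/(min a b)^2))⁻¹, ?_, ?_⟩
  · have h1 : 0 ≤ 4*(max a b)/(min a b) := by positivity
    have h2 : 0 ≤ 16*(max a b)^2/(min a b)^2 := by positivity
    apply inv_pos.2; linarith
  intro F hdet
  have hd : 0 < F 0 0 * F 1 1 - F 0 1 * F 1 0 := by
    rw [Matrix.det_fin_two] at hdet; exact hdet
  obtain ⟨r₁, hr₁def⟩ : ∃ x : ℝ, x = Real.sqrt (F 0 0 ^ 2 + F 1 0 ^ 2) := ⟨_, rfl⟩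
  obtain ⟨r₂, hr₂def⟩ : ∃ x : ℝ, x = Real.sqrt (F 0 1 ^ 2 + F 1 1 ^ 2) := ⟨_, rfl⟩
  rw [← hr₁def, ← hr₂def]
  have hr₁sq : r₁^2 = F 0 0 ^ 2 + F 1 0 ^ 2 := by
    rw [hr₁def]; exact Real.sq_sqrt (by positivity)
  have hr₂sq : r₂^2 = F 0 1 ^ 2 + F 1 1 ^ 2 := by
    rw [hr₂def]; exact Real.sq_sqrt (by positivity)
  have hr₁pos : 0 < r₁ := by
    rw [hr₁def]; exact Real.sqrt_pos.2 (col_pos (F 0 0) (F 0 1) (F 1 0) (F 1 1) hd)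
  have hr₂0 : 0 ≤ r₂ := by rw [hr₂def]; exact Real.sqrt_nonneg _
  obtain ⟨co, hcodef⟩ : ∃ x : ℝ, x = F 0 0 / r₁ := ⟨_, rfl⟩
  obtain ⟨si, hsidef⟩ : ∃ x : ℝ, x = F 1 0 / r₁ := ⟨_, rfl⟩
  have hco : F 0 0 = co * r₁ := by rw [hcodef, div_mul_cancel₀ _ hr₁pos.ne']
  have hsi : F 1 0 = si * r₁ := by rw [hsidef, div_mul_cancel₀ _ hr₁pos.ne']
  have hcs : co^2 + si^2 = 1 := by
    rw [hcodef, hsidef, div_pow, div_pow, ← add_div, ← hr₁sq,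
      div_self (pow_ne_zero 2 hr₁pos.ne')]
  obtain ⟨sg, hsgdef⟩ : ∃ x : ℝ, x = (F 0 0 * F 1 1 - F 0 1 * F 1 0) / r₁ := ⟨_, rfl⟩
  obtain ⟨ta, htadef⟩ : ∃ x : ℝ, x = (F 0 0 * F 0 1 + F 1 0 * F 1 1) / r₁ := ⟨_, rfl⟩
  have hsg : sg = co * F 1 1 - si * F 0 1 := by rw [hsgdef, hcodef, hsidef]; ring
  have hta : ta = co * F 0 1 + si * F 1 1 := by rw [htadef, hcodef, hsidef]; ring
  have hsgpos : 0 < sg := by rw [hsgdef]; exact div_pos hd hr₁pos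
  have hstq : sg^2 + ta^2 = r₂^2 := by
    rw [hsg, hta, hr₂sq]; linear_combination (F 0 1^2 + F 1 1^2) * hcs
  -- SO(2) membership of the rotation built from the first column
  have hQmem : (!![co, -si; si, co]) ∈ SO2 := by
    constructor
    · ext i j
      fin_cases i <;> fin_cases j
      · simp [Matrix.mul_apply, Fin.sum_univ_two, Matrix.one_apply,
          Matrix.transpose_apply, Matrix.vecHead, Matrix.vecTail]
        linear_combination hcs
      · simp [Matrix.mul_apply, Fin.sum_univ_two, Matrix.one_apply,
          Matrix.transpose_apply, Matrix.vecHead, Matrix.vecTail]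
        ring
      · simp [Matrix.mul_apply, Fin.sum_univ_two, Matrix.one_apply,
          Matrix.transpose_apply, Matrix.vecHead, Matrix.vecTail]
        ring
      · simp [Matrix.mul_apply, Fin.sum_univ_two, Matrix.one_apply,
          Matrix.transpose_apply, Matrix.vecHead, Matrix.vecTail]
        linear_combination hcs
    · rw [Matrix.det_fin_two_of]; linear_combination hcs
  have hM₁mem : (!![co*a, -(si*b); si*a, co*b]) ∈ wells a b := by
    left
    refine ⟨!![co, -si; si, co], hQmem, ?_⟩
    ext i j
    fin_cases i <;> fin_cases j <;>
      simp [Matrix.mul_apply, Fin.sum_univ_two] <;> ring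
  have hM₂mem : (!![co*b, -(si*a); si*b, co*a]) ∈ wells a b := by
    right
    refine ⟨!![co, -si; si, co], hQmem, ?_⟩
    ext i j
    fin_cases i <;> fin_cases j <;>
      simp [Matrix.mul_apply, Fin.sum_univ_two] <;> ring
  -- Frobenius norms of the two competitors
  have hfrob1 : frob (F - !![co*a, -(si*b); si*a, co*b])^2
      = (r₁ - a)^2 + ta^2 + (sg - b)^2 := by
    rw [frob, Real.sq_sqrt (by positivity)]
    simp only [Fin.sum_univ_two, Matrix.sub_apply, Matrix.cons_val', Matrix.cons_val_zero,
      Matrix.cons_val_one, Matrix.head_cons, Matrix.head_fin_const, Matrix.empty_val',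
      Matrix.cons_val_fin_one, Matrix.of_apply]
    rw [hco, hsi, hsg, hta]
    linear_combination well_identity co si r₁ (F 0 1) (F 1 1) a b hcs
  have hfrob2 : frob (F - !![co*b, -(si*a); si*b, co*a])^2
      = (r₁ - b)^2 + ta^2 + (sg - a)^2 := by
    rw [frob, Real.sq_sqrt (by positivity)]
    simp only [Fin.sum_univ_two, Matrix.sub_apply, Matrix.cons_val', Matrix.cons_val_zero,
      Matrix.cons_val_one, Matrix.head_cons, Matrix.head_fin_const, Matrix.empty_val',
      Matrix.cons_val_fin_one, Matrix.of_apply]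
    rw [hco, hsi, hsg, hta]
    linear_combination well_identity co si r₁ (F 0 1) (F 1 1) b a hcs
  -- distance estimates
  have hbdd : BddBelow ((fun M => frob (F - M)) '' wells a b) := by
    refine ⟨0, ?_⟩
    rintro x ⟨N, -, rfl⟩
    exact Real.sqrt_nonneg _
  have hdist0 : 0 ≤ distTo F (wells a b) := by
    apply Real.sInf_nonneg
    rintro x ⟨N, -, rfl⟩
    exact Real.sqrt_nonneg _
  have hle1 : distTo F (wells a b) ≤ frob (F - !![co*a, -(si*b); si*a, co*b]) :=
    csInf_le hbdd ⟨_, hM₁mem, rfl⟩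
  have hle2 : distTo F (wells a b) ≤ frob (F - !![co*b, -(si*a); si*b, co*a]) :=
    csInf_le hbdd ⟨_, hM₂mem, rfl⟩
  have hD1 : (distTo F (wells a b))^2 ≤ (r₁ - a)^2 + ta^2 + (sg - b)^2 := by
    rw [← hfrob1]; exact pow_le_pow_left₀ hdist0 hle1 2
  have hD2 : (distTo F (wells a b))^2 ≤ (r₁ - b)^2 + ta^2 + (sg - a)^2 := by
    rw [← hfrob2]; exact pow_le_pow_left₀ hdist0 hle2 2
  -- rewrite the off-diagonal term
  have hx : ta * r₁ = F 0 0 * F 0 1 + F 1 0 * F 1 1 := by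
    rw [htadef]; exact div_mul_cancel₀ _ hr₁pos.ne'
  have habseq : |F 0 0 * F 0 1 + F 1 0 * F 1 1| = r₁ * |ta| := by
    rw [← hx, abs_mul, abs_of_pos hr₁pos, mul_comm]
  rw [habseq]
  exact key_real a b (min a b) (max a b) r₁ r₂ sg ta _ hm (min_le_left a b)
    (min_le_right a b) (le_max_left a b) (le_max_right a b) hr₁pos hr₂0 hsgpos
    hstq hD1 hD2
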